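/- arXiv:2105.08159 — 5 statements merged into one kernel-verified Lean document; each statement's English description precedes it below -/
import Mathlib

section
/- Let $R_m, R_a, R'_a$ be positive reals, $S \geq 0$ a nonnegative real, and $\theta \in \mathbb{R}$. Define the complex number $C = \dfrac{R_m(R'_a+R_a)\cos\theta + i\,R_m(R_a-R'_a)\sin\theta}{R_aR'_a + R_mR_aR'_a S + R_m(R'_a+R_a)}$. Then $|C| < 1$. -/
/-- The complex coefficient `C` appearing in the exponential Euler growth factor
has modulus strictly less than `1` when all resistances are positive and the
total conductance is nonnegative. -/
theorem expo_euler_coeff_abs_lt_one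
    (Rm Ra Ra' S θ : ℝ) (hRm : 0 < Rm) (hRa : 0 < Ra) (hRa' : 0 < Ra') (hS : 0 ≤ S) :
    ‖((((Rm * (Ra' + Ra) * Real.cos θ : ℝ) : ℂ)
          + Complex.I * ((Rm * (Ra - Ra') * Real.sin θ : ℝ) : ℂ)) /
        ((Ra * Ra' + Rm * Ra * Ra' * S + Rm * (Ra' + Ra) : ℝ) : ℂ))‖ < 1 := by
  set a : ℝ := Rm * (Ra' + Ra) * Real.cos θ
  set b : ℝ := Rm * (Ra - Ra') * Real.sin θ
  set D : ℝ := Ra * Ra' + Rm * Ra * Ra' * S + Rm * (Ra' + Ra)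
  have hD : 0 < D := by positivity
  rw [norm_div, Complex.norm_real, Real.norm_eq_abs, abs_of_pos hD, div_lt_one hD]
  have habs : ‖(a : ℂ) + Complex.I * (b : ℂ)‖ = Real.sqrt (a ^ 2 + b ^ 2) := by
    rw [Complex.norm_def, Complex.normSq_apply]
    simp [Complex.add_re, Complex.add_im, Complex.mul_re, Complex.mul_im]
    ring_nf
  rw [habs]
  have hpyth := Real.sin_sq_add_cos_sq θ
  have hs1 : Real.sin θ ^ 2 ≤ 1 := by nlinarith [sq_nonneg (Real.cos θ)]
  have hc1 : Real.cos θ ^ 2 ≤ 1 := by nlinarith [sq_nonneg (Real.sin θ)]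
  have hlt : a ^ 2 + b ^ 2 < D ^ 2 := by
    have h1 : a ^ 2 + b ^ 2 ≤ (Rm * (Ra' + Ra)) ^ 2 := by
      simp only [a, b]
      nlinarith [sq_nonneg (Real.sin θ), sq_nonneg (Real.cos θ), sq_nonneg Rm,
        mul_pos hRa hRa', sq_nonneg (Rm * Real.sin θ), sq_nonneg (Rm * Real.cos θ)]
    have h2 : (Rm * (Ra' + Ra)) ^ 2 < D ^ 2 := by
      have hpos : 0 < Rm * (Ra' + Ra) := by positivity
      have : Rm * (Ra' + Ra) < D := by
        simp only [D]
        nlinarith [mul_pos hRa hRa', mul_nonneg (mul_nonneg (mul_nonneg hRm.le hRa.le) hRa'.le) hS]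
      nlinarith
    linarith
  calc Real.sqrt (a ^ 2 + b ^ 2) < Real.sqrt (D ^ 2) := by
        exact Real.sqrt_lt_sqrt (by positivity) hlt
    _ = D := by rw [Real.sqrt_sq hD.le]
end

section
/- Let $V, A, B : \mathbb{R} \to \mathbb{R}$ with $A$ and $B$ differentiable at $t$, $V$ differentiable on a neighborhood of $t$, and $V'(s) = A(s) - B(s)V(s)$ for all $s$ in that neighborhood. Then the local error of one frozen-coefficient RK21 step of size $k$ satisfies $V(t+k) - \Bigl[V(t) + k\bigl(A(t) - B(t)V(t)\bigr) - \tfrac{k^2}{2}B(t)\bigl(A(t) - B(t)V(t)\bigr)\Bigr] = \tfrac{k^2}{2}\bigl(A'(t) - B'(t)V(t)\bigr) + o(k^2)$ as $k \to 0$. In particular, when $A' (t)- B'(t)V(t) \neq 0$ the second-order term of the local error does not vanish, so RK21 is only a first-order method for the time-varying linear equation $V' = A - BV$. -/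
open Asymptotics Filter Set

lemma aux_o2 {F F' : ℝ → ℝ} (hd : ∀ᶠ k in nhds (0:ℝ), HasDerivAt F (F' k) k)
    (hF0 : F 0 = 0) (h' : F' =o[nhds 0] fun k => k) :
    F =o[nhds 0] fun k : ℝ => k ^ 2 := by
  rw [Asymptotics.isLittleO_iff]
  intro ε hε
  have h2 := hd.and ((Asymptotics.isLittleO_iff.mp h') hε)
  rw [Metric.eventually_nhds_iff] at h2 ⊢
  obtain ⟨δ, hδ, hδp⟩ := h2
  refine ⟨δ, hδ, fun k hk => ?_⟩
  simp only [Real.dist_eq, sub_zero] at hk hδp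
  have hmem : ∀ x ∈ Icc (min 0 k) (max 0 k), |x| ≤ |k| := by
    intro x hx
    rcases le_total 0 k with h | h
    · rw [min_eq_left h, max_eq_right h] at hx
      rw [abs_of_nonneg hx.1, abs_of_nonneg h]; exact hx.2
    · rw [min_eq_right h, max_eq_left h] at hx
      rw [abs_of_nonpos (hx.2.trans (le_of_eq rfl)), abs_of_nonpos h]
      linarith [hx.1]
  have hf : ∀ x ∈ Icc (min 0 k) (max 0 k),
      HasDerivWithinAt F (F' x) (Icc (min 0 k) (max 0 k)) x := by
    intro x hx
    exact ((hδp (lt_of_le_of_lt (hmem x hx) hk)).1).hasDerivWithinAt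
  have hbound : ∀ x ∈ Ico (min 0 k) (max 0 k), ‖F' x‖ ≤ ε * |k| := by
    intro x hx
    have := (hδp (lt_of_le_of_lt (hmem x ⟨hx.1, hx.2.le⟩) hk)).2
    calc ‖F' x‖ ≤ ε * ‖x‖ := this
    _ ≤ ε * |k| := by
        have := hmem x ⟨hx.1, hx.2.le⟩
        exact mul_le_mul_of_nonneg_left (by simpa using this) hε.le
  have key := norm_image_sub_le_of_norm_deriv_le_segment' hf hbound
  have hk2 : ‖F k‖ ≤ ε * |k| * |k| := by
    rcases le_total 0 k with h | h
    · have := key k ⟨by simp [min_le_iff, h], by simp [le_max_iff, le_refl]⟩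
      rw [min_eq_left h] at this
      simpa [hF0, abs_of_nonneg h] using this
    · have := key 0 ⟨by simp [min_le_iff, le_refl], by simp [le_max_iff, le_refl]⟩
      rw [min_eq_right h] at this
      simp only [hF0, zero_sub, norm_neg, zero_sub] at this
      calc ‖F k‖ = ‖-F k‖ := (norm_neg _).symm
      _ ≤ ε * |k| * (0 - k) := by simpa using this
      _ = ε * |k| * |k| := by rw [abs_of_nonpos h]; ring
  calc ‖F k‖ ≤ ε * |k| * |k| := hk2
  _ = ε * ‖k ^ 2‖ := by rw [mul_assoc, ← abs_mul]; norm_num [sq, abs_of_nonneg (mul_self_nonneg k)]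

/-- Local error of one frozen-coefficient RK21 step of size `k` for the
time-varying linear equation `V' = A - BV`:
`V(t+k) - Φₖ(V(t)) = (k²/2)(A'(t) - B'(t)V(t)) + o(k²)` as `k → 0`; in
particular, when `A'(t) - B'(t)V(t) ≠ 0` the second-order term of the local
error does not vanish, so RK21 is only first-order. -/
theorem rk21_frozen_local_error
    (V A B : ℝ → ℝ) (t A' B' : ℝ)
    (hA : HasDerivAt A A' t) (hB : HasDerivAt B B' t)
    (U : Set ℝ) (hU : U ∈ nhds t)
    (hV : ∀ s ∈ U, HasDerivAt V (A s - B s * V s) s) :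
    ((fun k : ℝ =>
        V (t + k) -
          (V t + k * (A t - B t * V t) - k ^ 2 / 2 * (B t * (A t - B t * V t))) -
          k ^ 2 / 2 * (A' - B' * V t)) =o[nhds 0] fun k : ℝ => k ^ 2) ∧
    (A' - B' * V t ≠ 0 →
      ¬ ((fun k : ℝ =>
          V (t + k) -
            (V t + k * (A t - B t * V t) - k ^ 2 / 2 * (B t * (A t - B t * V t))))
        =o[nhds 0] fun k : ℝ => k ^ 2)) := by
  set X := A t - B t * V t with hX
  set Y := B t * X with hY
  set c := A' - B' * V t with hc
  set F : ℝ → ℝ := fun k =>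
    V (t + k) - (V t + k * X - k ^ 2 / 2 * Y) - k ^ 2 / 2 * c with hF
  set F' : ℝ → ℝ := fun k =>
    (A (t + k) - B (t + k) * V (t + k)) - (X - k * Y) - k * c with hF'
  -- F 0 = 0
  have hF0 : F 0 = 0 := by simp [hF]
  -- eventually HasDerivAt F (F' k) k
  have hd : ∀ᶠ k in nhds (0:ℝ), HasDerivAt F (F' k) k := by
    have hUev : ∀ᶠ k in nhds (0:ℝ), t + k ∈ U := by
      have : Continuous fun k : ℝ => t + k := by continuity
      have := this.continuousAt (x := (0:ℝ))
      exact this.preimage_mem_nhds (by simpa using hU)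
    filter_upwards [hUev] with k hk
    have hlin : HasDerivAt (fun k : ℝ => t + k) 1 k := (hasDerivAt_id k).const_add t
    have h1 : HasDerivAt (fun k => V (t + k))
        (A (t + k) - B (t + k) * V (t + k)) k := by
      have := (hV (t + k) hk).comp k hlin
      rw [mul_one] at this; exact this
    have hk2 : HasDerivAt (fun k : ℝ => k ^ 2) (2 * k) k := by
      simpa using hasDerivAt_pow 2 k
    have h2 : HasDerivAt (fun k : ℝ => V t + k * X - k ^ 2 / 2 * Y + k ^ 2 / 2 * c)
        (X - k * Y + k * c) k := by
      have := (((hasDerivAt_const k (V t)).add ((hasDerivAt_id k).mul_const X)).sub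
        ((hk2.div_const 2).mul_const Y)).add ((hk2.div_const 2).mul_const c)
      refine this.congr_deriv ?_
      ring
    have h3 := h1.sub h2
    have hFeq : F = fun x : ℝ => V (t + x) - (V t + x * X - x ^ 2 / 2 * Y + x ^ 2 / 2 * c) := by
      funext x; simp only [hF]; ring
    have hF'eq : F' k = A (t + k) - B (t + k) * V (t + k) - (X - k * Y + k * c) := by
      simp only [hF']; ring
    rw [hFeq, hF'eq]; exact h3
  -- F' is o(k)
  have hVt : HasDerivAt V (A t - B t * V t) t := hV t (mem_of_mem_nhds hU)
  have hlin0 : HasDerivAt (fun k : ℝ => t + k) 1 0 := (hasDerivAt_id 0).const_add t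
  have hA0 : HasDerivAt A A' ((fun k : ℝ => t + k) 0) := by simpa using hA
  have hB0 : HasDerivAt B B' ((fun k : ℝ => t + k) 0) := by simpa using hB
  have hV0 : HasDerivAt V (A t - B t * V t) ((fun k : ℝ => t + k) 0) := by simpa using hVt
  have hAc : HasDerivAt (fun k : ℝ => A (t + k)) A' 0 := by
    have := hA0.comp 0 hlin0; rw [mul_one] at this; exact this
  have hBc : HasDerivAt (fun k : ℝ => B (t + k)) B' 0 := by
    have := hB0.comp 0 hlin0; rw [mul_one] at this; exact this
  have hVc : HasDerivAt (fun k : ℝ => V (t + k)) (A t - B t * V t) 0 := by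
    have := hV0.comp 0 hlin0; rw [mul_one] at this; exact this
  have hG : HasDerivAt (fun k : ℝ => A (t + k) - B (t + k) * V (t + k)) (c - Y) 0 := by
    have := hAc.sub (hBc.mul hVc)
    refine this.congr_deriv ?_
    simp [hc, hY, hX]
    ring
  have h' : F' =o[nhds (0:ℝ)] fun k => k := by
    have := hG.isLittleO
    refine this.congr' ?_ ?_
    · filter_upwards with k
      simp [hF', hX]
      ring
    · filter_upwards with k
      simp
  have part1 : F =o[nhds (0:ℝ)] fun k : ℝ => k ^ 2 := aux_o2 hd hF0 h'
  refine ⟨part1, ?_⟩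
  intro hcne hcontra
  have hsub : (fun k : ℝ => k ^ 2 / 2 * c) =o[nhds (0:ℝ)] fun k : ℝ => k ^ 2 := by
    have := hcontra.sub part1
    refine this.congr' ?_ (by rfl)
    filter_upwards with k
    simp only [hF]
    ring
  have : (fun k : ℝ => (c / 2) • (k ^ 2)) =o[nhds (0:ℝ)] fun k : ℝ => k ^ 2 := by
    refine hsub.congr' ?_ (by rfl)
    filter_upwards with k
    simp [smul_eq_mul]
    ring
  rw [Asymptotics.isLittleO_const_smul_left (div_ne_zero hcne two_ne_zero)] at this
  refine Asymptotics.isLittleO_irrefl ?_ this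
  have h : ∀ᶠ x in nhdsWithin (0:ℝ) {(0:ℝ)}ᶜ, x ^ 2 ≠ 0 :=
    eventually_mem_nhdsWithin.mono fun x hx => pow_ne_zero 2 hx
  exact h.frequently.filter_mono nhdsWithin_le_nhds
end

section
/- Let $V, A, B : \mathbb{R} \to \mathbb{R}$ with $A$ and $B$ differentiable at $t$, $V$ differentiable on a neighborhood of $t$, and $V'(s) = A(s) - B(s)V(s)$ for all $s$ in that neighborhood. Let $\Phi_k$ denote one frozen-coefficient classical RK4 step of size $k$ for the affine map $f(x) = A(t) - B(t)x$, so that $\Phi_k(V(t)) = V(t) + k(A(t)-B(t)V(t)) - \tfrac{k^2}{2}B(t)(A(t)-B(t)V(t)) + \tfrac{k^3}{6}B(t)^2(A(t)-B(t)V(t)) - \tfrac{k^4}{24}B(t)^3(A(t)-B(t)V(t))$. Then $V(t+k) - \Phi_k(V(t)) = \tfrac{k^2}{2}\bigl(A'(t) - B'(t)V(t)\bigr) + o(k^2)$ as $k \to 0$; hence when $A'(t) - B'(t)V(t) \neq 0$ the classical fourth-order Runge–Kutta method is rendered a first-order method for the time-varying linear equation $V' = A - BV$. -/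
open Asymptotics Filter

/-- Second-order Taylor remainder: if `g 0 = 0`, `g` has derivative `g'` near `0`,
and `g' =o(k)`, then `g =o(k²)`. -/
lemma taylor2_aux (g g' : ℝ → ℝ) (hg0 : g 0 = 0)
    (hd : ∀ᶠ k in nhds 0, HasDerivAt g (g' k) k)
    (ho : g' =o[nhds 0] fun k => k) :
    g =o[nhds 0] fun k : ℝ => k ^ 2 := by
  rw [Asymptotics.isLittleO_iff] at ho ⊢
  intro ε hε
  obtain ⟨δ, hδ, H⟩ := Metric.eventually_nhds_iff.mp (hd.and (ho hε))
  rw [Metric.eventually_nhds_iff]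
  refine ⟨δ, hδ, fun k hk => ?_⟩
  have habs : ∀ x ∈ Set.uIcc (0 : ℝ) k, |x| ≤ |k| := by
    intro x hx
    rcases Set.mem_uIcc.mp hx with ⟨h1, h2⟩ | ⟨h1, h2⟩
    · rw [abs_of_nonneg h1]; exact le_trans h2 (le_abs_self k)
    · rw [abs_of_nonpos h2]; exact le_trans (neg_le_neg h1) (neg_le_abs k)
  have hsub : ∀ x ∈ Set.uIcc (0 : ℝ) k, dist x 0 < δ := by
    intro x hx
    have := habs x hx
    simpa [Real.dist_eq] using lt_of_le_of_lt this (by simpa [Real.dist_eq] using hk)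
  have hderiv : ∀ x ∈ Set.uIcc (0 : ℝ) k,
      HasDerivWithinAt g (g' x) (Set.uIcc (0 : ℝ) k) x :=
    fun x hx => ((H (hsub x hx)).1).hasDerivWithinAt
  have hbound : ∀ x ∈ Set.uIcc (0 : ℝ) k, ‖g' x‖ ≤ ε * |k| := by
    intro x hx
    calc ‖g' x‖ ≤ ε * ‖x‖ := (H (hsub x hx)).2
    _ ≤ ε * |k| := by
        have := habs x hx
        exact mul_le_mul_of_nonneg_left (by simpa using this) hε.le
  have key := (convex_uIcc (0 : ℝ) k).norm_image_sub_le_of_norm_hasDerivWithin_le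
    hderiv hbound Set.left_mem_uIcc Set.right_mem_uIcc
  have : ‖g k - g 0‖ ≤ ε * |k| * |k| := by simpa [Real.norm_eq_abs] using key
  calc ‖g k‖ = ‖g k - g 0‖ := by rw [hg0, sub_zero]
  _ ≤ ε * |k| * |k| := this
  _ = ε * ‖k ^ 2‖ := by rw [Real.norm_eq_abs, abs_pow]; ring

/-- Local error of one frozen-coefficient classical RK4 step of size `k` for the
time-varying linear equation `V' = A - BV`:
`V(t+k) - Φₖ(V(t)) = (k²/2)(A'(t) - B'(t)V(t)) + o(k²)` as `k → 0`; hence when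
`A'(t) - B'(t)V(t) ≠ 0` the classical fourth-order Runge–Kutta method is
rendered a first-order method. -/
theorem rk41_frozen_local_error
    (V A B : ℝ → ℝ) (t A' B' : ℝ)
    (hA : HasDerivAt A A' t) (hB : HasDerivAt B B' t)
    (U : Set ℝ) (hU : U ∈ nhds t)
    (hV : ∀ s ∈ U, HasDerivAt V (A s - B s * V s) s) :
    ((fun k : ℝ =>
        V (t + k) -
          (V t + k * (A t - B t * V t) - k ^ 2 / 2 * (B t * (A t - B t * V t))
            + k ^ 3 / 6 * (B t ^ 2 * (A t - B t * V t))
            - k ^ 4 / 24 * (B t ^ 3 * (A t - B t * V t))) -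
          k ^ 2 / 2 * (A' - B' * V t)) =o[nhds 0] fun k : ℝ => k ^ 2) ∧
    (A' - B' * V t ≠ 0 →
      ¬ ((fun k : ℝ =>
          V (t + k) -
            (V t + k * (A t - B t * V t) - k ^ 2 / 2 * (B t * (A t - B t * V t))
              + k ^ 3 / 6 * (B t ^ 2 * (A t - B t * V t))
              - k ^ 4 / 24 * (B t ^ 3 * (A t - B t * V t))))
        =o[nhds 0] fun k : ℝ => k ^ 2)) := by
  set c₁ : ℝ := A t - B t * V t with hc₁
  set c : ℝ := A' - B' * V t - B t * c₁ with hc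
  -- `W = A - B*V` has derivative `c` at `t`
  have htU : t ∈ U := mem_of_mem_nhds hU
  have hW : HasDerivAt (fun s => A s - B s * V s) c t := by
    have := hA.sub (hB.mul (hV t htU))
    convert this using 1
    · rfl
    · rfl
    · rfl
    rw [hc, hc₁]; ring
  -- define g and g'
  set g : ℝ → ℝ := fun k => V (t + k) - V t - k * c₁ - k ^ 2 / 2 * c with hg
  set g' : ℝ → ℝ := fun k => (A (t + k) - B (t + k) * V (t + k)) - c₁ - k * c with hg'
  have hg0 : g 0 = 0 := by simp [hg]
  have hmem : ∀ᶠ k in nhds (0 : ℝ), t + k ∈ U := by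
    have hcont : Continuous fun k : ℝ => t + k := continuous_const.add continuous_id
    have : Filter.Tendsto (fun k : ℝ => t + k) (nhds 0) (nhds t) := by
      simpa using hcont.tendsto 0
    exact this.eventually_mem hU
  have hd : ∀ᶠ k in nhds (0 : ℝ), HasDerivAt g (g' k) k := by
    filter_upwards [hmem] with k hk
    have h1 : HasDerivAt (fun k : ℝ => V (t + k))
        (A (t + k) - B (t + k) * V (t + k)) k :=
      (hV (t + k) hk).comp_const_add t k
    have h2 : HasDerivAt (fun k : ℝ => V t + k * c₁ + k ^ 2 / 2 * c)
        (c₁ + k * c) k := by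
      have : HasDerivAt (fun k : ℝ => V t + k * c₁ + k ^ 2 / 2 * c)
          (0 + 1 * c₁ + (2 * k ^ 1 / 2) * c) k := by
        exact ((hasDerivAt_const k (V t)).add ((hasDerivAt_id k).mul_const c₁)).add
          (((hasDerivAt_pow 2 k).div_const 2).mul_const c)
      convert this using 1; ring
    have := h1.sub h2
    convert this using 1
    · rfl
    · rfl
    · funext x; simp [hg]; ring
    · simp only [hg']; ring
  have ho : g' =o[nhds (0 : ℝ)] fun k => k := by
    have hWk : HasDerivAt (fun k : ℝ => A (t + k) - B (t + k) * V (t + k)) c 0 := by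
      have h0 : HasDerivAt (fun s => A s - B s * V s) c (t + 0) := by simpa using hW
      exact h0.comp_const_add t 0
    have := hasDerivAt_iff_isLittleO.mp hWk
    simp only [add_zero, sub_zero, smul_eq_mul] at this
    refine this.congr_left fun k => ?_
    simp only [hg', hc₁]
  have hmain := taylor2_aux g g' hg0 hd ho
  have htail : (fun k : ℝ => k ^ 4 / 24 * (B t ^ 3 * c₁) - k ^ 3 / 6 * (B t ^ 2 * c₁))
      =o[nhds 0] fun k : ℝ => k ^ 2 := by
    have h3 : (fun k : ℝ => k ^ 3) =o[nhds (0 : ℝ)] fun k => k ^ 2 :=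
      isLittleO_pow_pow (by norm_num)
    have h4 : (fun k : ℝ => k ^ 4) =o[nhds (0 : ℝ)] fun k => k ^ 2 :=
      isLittleO_pow_pow (by norm_num)
    have := (h4.const_mul_left (B t ^ 3 * c₁ / 24)).sub
      (h3.const_mul_left (B t ^ 2 * c₁ / 6))
    refine this.congr_left fun k => ?_; ring
  have hfirst : (fun k : ℝ =>
        V (t + k) -
          (V t + k * (A t - B t * V t) - k ^ 2 / 2 * (B t * (A t - B t * V t))
            + k ^ 3 / 6 * (B t ^ 2 * (A t - B t * V t))
            - k ^ 4 / 24 * (B t ^ 3 * (A t - B t * V t))) -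
          k ^ 2 / 2 * (A' - B' * V t)) =o[nhds 0] fun k : ℝ => k ^ 2 := by
    refine (hmain.add htail).congr_left fun k => ?_
    simp only [hg, hc, hc₁]; ring
  refine ⟨hfirst, fun hne hcontra => ?_⟩
  have hconst : (fun k : ℝ => k ^ 2 / 2 * (A' - B' * V t)) =o[nhds 0]
      fun k : ℝ => k ^ 2 := by
    refine (hcontra.sub hfirst).congr_left fun k => ?_
    ring
  have hsq : (fun k : ℝ => k ^ 2) =o[nhds (0 : ℝ)] fun k : ℝ => k ^ 2 := by
    have := hconst.const_mul_left (2 / (A' - B' * V t))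
    refine this.congr_left fun k => ?_
    field_simp
  have : ∃ᶠ k in nhds (0 : ℝ), (fun k : ℝ => k ^ 2) k ≠ 0 := by
    have : ∀ᶠ k in nhdsWithin (0 : ℝ) {0}ᶜ, k ^ 2 ≠ (0 : ℝ) := by
      filter_upwards [self_mem_nhdsWithin] with k hk
      exact pow_ne_zero 2 hk
    exact (this.frequently).filter_mono nhdsWithin_le_nhds
  exact isLittleO_irrefl this hsq
end

section
/- Let $V, A, B : \mathbb{R} \to \mathbb{R}$ with $A$ and $B$ differentiable at $t$, $B(t) \neq 0$, $V$ differentiable on a neighborhood of $t$, and $V'(s) = A(s) - B(s)V(s)$ for all $s$ in that neighborhood. Define the frozen-coefficient exponential Euler step $\Phi_k(v) = \tfrac{A(t)}{B(t)} + \bigl(v - \tfrac{A(t)}{B(t)}\bigr)e^{-B(t)k}$. Then $V(t+k) - \Phi_k(V(t)) = \tfrac{k^2}{2}\bigl(A'(t) - B'(t)V(t)\bigr) + o(k^2)$ as $k \to 0$; hence the exponential Euler method is only first-order accurate for the time-varying linear equation $V' = A - BV$ when $A'(t) - B'(t)V(t) \neq 0$. -/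
open Asymptotics Filter

private lemma littleO_sq_of_deriv (g g' : ℝ → ℝ) (hg0 : g 0 = 0)
    (hdiff : ∀ᶠ s in nhds (0:ℝ), HasDerivAt g (g' s) s)
    (hg' : g' =o[nhds 0] fun s : ℝ => s) :
    g =o[nhds 0] fun k : ℝ => k ^ 2 := by
  rw [Asymptotics.isLittleO_iff] at hg' ⊢
  intro ε hε
  obtain ⟨δ, hδ, hδ'⟩ := Metric.eventually_nhds_iff.mp (hdiff.and (hg' hε))
  rw [Metric.eventually_nhds_iff]
  refine ⟨δ, hδ, fun k hk => ?_⟩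
  have hsk : ∀ s ∈ segment ℝ (0:ℝ) k, |s| ≤ |k| := by
    intro s hs
    rw [segment_eq_uIcc, Set.mem_uIcc] at hs
    rcases hs with ⟨h1, h2⟩ | ⟨h1, h2⟩
    · rw [abs_of_nonneg h1, abs_of_nonneg (h1.trans h2)]; exact h2
    · rw [abs_of_nonpos h2, abs_of_nonpos (h1.trans h2)]; exact neg_le_neg h1
  have hsub : segment ℝ (0:ℝ) k ⊆ Metric.ball 0 δ := by
    intro s hs
    rw [Metric.mem_ball, Real.dist_eq, sub_zero]
    rw [Real.dist_eq, sub_zero] at hk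
    exact lt_of_le_of_lt (hsk s hs) hk
  have key := Convex.norm_image_sub_le_of_norm_hasDerivWithin_le
    (f := g) (f' := g') (C := ε * |k|) (s := segment ℝ (0:ℝ) k)
    (fun s hs => (hδ' (by simpa [Real.dist_eq] using hsub hs)).1.hasDerivWithinAt)
    (fun s hs => by
      have h2 := (hδ' (by simpa [Real.dist_eq] using hsub hs)).2
      calc ‖g' s‖ ≤ ε * ‖s‖ := h2
        _ ≤ ε * |k| := mul_le_mul_of_nonneg_left (by simpa using hsk s hs) hε.le)
    (convex_segment _ _) (left_mem_segment ℝ 0 k) (right_mem_segment ℝ 0 k)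
  rw [hg0, sub_zero, sub_zero] at key
  calc ‖g k‖ ≤ ε * |k| * ‖k‖ := key
    _ = ε * ‖k ^ 2‖ := by
        simp [Real.norm_eq_abs, pow_two, abs_mul]; ring_nf; rw [sq_abs]

/-- Local error of one frozen-coefficient exponential Euler step of size `k` for
the time-varying linear equation `V' = A - BV`:
`V(t+k) - Φₖ(V(t)) = (k²/2)(A'(t) - B'(t)V(t)) + o(k²)` as `k → 0`; hence the
exponential Euler method is only first-order accurate when
`A'(t) - B'(t)V(t) ≠ 0`. -/
theorem expo_euler_frozen_local_error
    (V A B : ℝ → ℝ) (t A' B' : ℝ)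
    (hA : HasDerivAt A A' t) (hB : HasDerivAt B B' t) (hBt : B t ≠ 0)
    (U : Set ℝ) (hU : U ∈ nhds t)
    (hV : ∀ s ∈ U, HasDerivAt V (A s - B s * V s) s) :
    ((fun k : ℝ =>
        V (t + k) -
          (A t / B t + (V t - A t / B t) * Real.exp (-B t * k)) -
          k ^ 2 / 2 * (A' - B' * V t)) =o[nhds 0] fun k : ℝ => k ^ 2) ∧
    (A' - B' * V t ≠ 0 →
      ¬ ((fun k : ℝ =>
          V (t + k) - (A t / B t + (V t - A t / B t) * Real.exp (-B t * k)))
        =o[nhds 0] fun k : ℝ => k ^ 2)) := by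
  set a := A t with ha
  set b := B t with hb
  set v := V t with hv
  set C := A' - B' * V t with hC
  set g : ℝ → ℝ := fun k =>
    V (t + k) - (a / b + (v - a / b) * Real.exp (-b * k)) - k ^ 2 / 2 * C with hg
  set g' : ℝ → ℝ := fun k =>
    (A (t + k) - B (t + k) * V (t + k)) + (v - a / b) * b * Real.exp (-b * k) - k * C
    with hg'
  have hmem : ∀ᶠ k in nhds (0:ℝ), t + k ∈ U := by
    have hc : Filter.Tendsto (fun k : ℝ => t + k) (nhds 0) (nhds t) := by
      exact (continuous_add_left t).tendsto' 0 t (by simp)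
    exact hc hU
  have hdiff : ∀ᶠ k in nhds (0:ℝ), HasDerivAt g (g' k) k := by
    filter_upwards [hmem] with k hk
    have h1 : HasDerivAt (fun k : ℝ => V (t + k)) (A (t + k) - B (t + k) * V (t + k)) k := by
      have := (hV _ hk).comp k ((hasDerivAt_id k).const_add t)
      simpa [Function.comp_def] using this
    have h2 : HasDerivAt (fun k : ℝ => Real.exp (-b * k)) (Real.exp (-b * k) * (-b)) k := by
      have : HasDerivAt (fun k : ℝ => -b * k) (-b) k := by
        simpa using (hasDerivAt_id k).const_mul (-b)
      exact this.exp
    have h3 : HasDerivAt (fun k : ℝ => k ^ 2 / 2 * C) (k * C) k := by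
      have h4 : HasDerivAt (fun k : ℝ => k ^ 2) (2 * k) k := by
        simpa using (hasDerivAt_pow 2 k)
      have := (h4.div_const 2).mul_const C
      rw [show k * C = 2 * k / 2 * C by ring]; exact this
    have hcomb := (h1.sub ((h2.const_mul (v - a/b)).const_add (a/b))).sub h3
    have heq : g' k = (A (t + k) - B (t + k) * V (t + k)) -
        (v - a / b) * (Real.exp (-b * k) * (-b)) - k * C := by
      rw [hg']; ring
    rw [heq]
    exact hcomb
  -- second derivative data at 0
  have hlin : HasDerivAt (fun k : ℝ => t + k) 1 0 := by
    simpa using (hasDerivAt_id (0:ℝ)).const_add t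
  have hAk : HasDerivAt (fun k : ℝ => A (t + k)) A' 0 := by
    have h0 : HasDerivAt A A' (t + 0) := by rwa [add_zero]
    simpa [Function.comp_def] using h0.comp 0 hlin
  have hBk : HasDerivAt (fun k : ℝ => B (t + k)) B' 0 := by
    have h0 : HasDerivAt B B' (t + 0) := by rwa [add_zero]
    simpa [Function.comp_def] using h0.comp 0 hlin
  have hVt : HasDerivAt V (a - b * v) t := hV t (mem_of_mem_nhds hU)
  have hVk : HasDerivAt (fun k : ℝ => V (t + k)) (a - b * v) 0 := by
    have h0 : HasDerivAt V (a - b * v) (t + 0) := by rwa [add_zero]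
    simpa [Function.comp_def] using h0.comp 0 hlin
  have hE : HasDerivAt (fun k : ℝ => Real.exp (-b * k)) (-b) 0 := by
    have h : HasDerivAt (fun k : ℝ => -b * k) (-b) 0 := by
      simpa using (hasDerivAt_id (0:ℝ)).const_mul (-b)
    simpa using h.exp
  have hg'0 : g' 0 = 0 := by
    rw [hg']
    simp only [add_zero, mul_zero, neg_zero, Real.exp_zero, zero_mul, mul_one,
      ← ha, ← hb, ← hv]
    field_simp
    ring
  have hD : HasDerivAt g' 0 0 := by
    have hprod := hBk.mul hVk
    simp only [add_zero] at hprod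
    have hcomb := ((hAk.sub hprod).add (hE.const_mul ((v - a/b) * b))).sub
      ((hasDerivAt_id (0:ℝ)).mul_const C)
    have heq : A' - (B' * V t + B t * (a - b * v)) + (v - a / b) * b * -b - 1 * C = 0 := by
      simp only [hC, ← ha, ← hb, ← hv]
      field_simp
      ring
    have hfin : HasDerivAt g' (A' - (B' * V t + B t * (a - b * v)) + (v - a / b) * b * -b - 1 * C) 0 :=
      hcomb
    rwa [heq] at hfin
  have hO : g' =o[nhds 0] fun s : ℝ => s := by
    have h := hasDerivAt_iff_isLittleO.mp hD
    simp only [sub_zero, smul_zero, hg'0] at h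
    simpa using h
  have hg0 : g 0 = 0 := by
    rw [hg]
    simp only [add_zero, mul_zero, neg_zero, Real.exp_zero, mul_one, zero_pow,
      ← ha, ← hb, ← hv]
    ring
  have part1 : g =o[nhds 0] fun k : ℝ => k ^ 2 :=
    littleO_sq_of_deriv g g' hg0 hdiff hO
  refine ⟨part1, fun hC0 hcon => ?_⟩
  have h3 : (fun k : ℝ => k ^ 2 / 2 * C) =o[nhds 0] fun k : ℝ => k ^ 2 := by
    have := hcon.sub part1
    refine this.congr_left fun k => by rw [hg]; ring
  rw [Asymptotics.isLittleO_iff] at h3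
  have hε : (0:ℝ) < |C| / 4 := by positivity
  obtain ⟨δ, hδ, hδ'⟩ := Metric.eventually_nhds_iff.mp (h3 hε)
  have hk : dist (δ/2) (0:ℝ) < δ := by
    rw [Real.dist_eq, sub_zero, abs_of_pos (by linarith)]; linarith
  have := hδ' hk
  rw [Real.norm_eq_abs, Real.norm_eq_abs, abs_mul, abs_div, abs_pow] at this
  have hd2 : |δ/2| = δ/2 := abs_of_pos (by linarith)
  rw [hd2, abs_two] at this
  have hCpos : 0 < |C| := abs_pos.mpr hC0
  have hsq : 0 < (δ/2)^2 := by positivity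
  nlinarith [this, hsq, hCpos]
end

section
/- Let $B > 0$ and $P$ be reals with $0 < P \leq 4B$, and for $k \geq 0$ define $g(k) = 1 - Pk + \tfrac{BP}{2}k^2$. Then $|g(k)| \leq 1$ if and only if $k \leq 2/B$. -/
/-- With `B > 0`, `0 < P ≤ 4B`, the RK21 quasi-finite-difference growth factor
`g(k) = 1 - Pk + (BP/2)k²` satisfies `|g(k)| ≤ 1` iff `k ≤ 2/B`. -/
theorem rk21_quasi_fd_stability (B P : ℝ) (hB : 0 < B) (hP : 0 < P) (hPB : P ≤ 4 * B)
    (k : ℝ) (hk : 0 ≤ k) :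
    |1 - P * k + B * P / 2 * k ^ 2| ≤ 1 ↔ k ≤ 2 / B := by
  rw [abs_le]
  constructor
  · rintro ⟨-, h2⟩
    rw [le_div_iff₀ hB]
    -- from (BP/2)k² ≤ Pk get k(Bk - 2) ≤ 0
    rcases eq_or_lt_of_le hk with h | h
    · nlinarith
    · nlinarith [mul_pos hP h]
  · intro h
    rw [le_div_iff₀ hB] at h
    constructor
    · nlinarith [sq_nonneg (B * k - 1), mul_pos hB hP]
    · nlinarith [mul_nonneg (mul_nonneg hP.le hk) (sub_nonneg.2 h)]
end
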